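/- Let p and q be distinct prime numbers with p ≡ 1 (mod 8) and q ≡ 1 (mod 8), and assume that p is a quadratic residue modulo q (equivalently, by quadratic reciprocity, q is a quadratic residue modulo p). Then there exist integers x, y, z satisfying x² − p·y² − q·z² = 0 with gcd(x, y, z) = 1, such that y is even and x ≡ 1 + y (mod 4) (equivalently, x + y·√p ≡ 1 modulo 4·O, where O is the ring of integers of ℚ(√p)). -/

import Mathlib

set_option maxHeartbeats 1600000

lemma sq_eq_four_pow (n : ℕ) : ∀ (x d : ℤ), x^2 = ((2:ℤ)^n)^2 * d → Odd d → ∃ x1, x = 2^n * x1 ∧ Odd x1 := by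
  induction n with
  | zero => intro x d h hd
            refine ⟨x, by simpa using rfl, ?_⟩
            have : Odd (x^2) := by simpa [h] using hd
            simpa [Int.odd_pow] using this
  | succ n ih =>
    intro x d h hd
    have hx : Even x := by
      by_contra hodd
      have hox : Odd x := Int.not_even_iff_odd.mp hodd
      have h1 : Odd (x^2) := hox.pow
      have h2 : Even (x^2) := by
        rw [h]
        exact (Even.mul_right ⟨2^n*2^(n+1), by rw [pow_succ]; ring⟩ d)
      exact (Int.not_even_iff_odd.mpr h1) h2
    obtain ⟨y, rfl⟩ := hx
    have h' : y^2 = ((2:ℤ)^n)^2 * d := by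
      have h4 : (4:ℤ) ≠ 0 := by norm_num
      have hh : 4*y^2 = 4*(((2:ℤ)^n)^2*d) := by
        have e1 : (y+y)^2 = 4*y^2 := by ring
        have e2 : (((2:ℤ)^(n+1))^2) = 4*((2:ℤ)^n)^2 := by rw [pow_succ]; ring
        rw [← e1, h, e2]; ring
      exact mul_left_cancel₀ h4 hh
    obtain ⟨x1, hx1, hodd⟩ := ih y d h' hd
    exact ⟨x1, by rw [hx1, pow_succ]; ring, hodd⟩

lemma bad_to_good (p q x y z : ℤ) (hq8 : q % 8 = 1)
    (heq : x^2 - p*y^2 - q*z^2 = 0) (hx : Odd x) (hy : Odd y) (hze : Even z) (hz : z ≠ 0) :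
    ∃ X Y Z : ℤ, X^2 - p*Y^2 - q*Z^2 = 0 ∧ Odd X ∧ Even Y := by
  -- decompose z = 2^c * z₀ with z₀ odd
  obtain ⟨c, m0, hm0odd, hn⟩ := Nat.exists_eq_two_pow_mul_odd (n := z.natAbs) (by simpa using hz)
  set E : ℤ := (2:ℤ)^c with hEdef
  have hE0 : E ≠ 0 := pow_ne_zero _ two_ne_zero
  obtain ⟨z₀, hz0, hz₀odd⟩ : ∃ z₀ : ℤ, z = E * z₀ ∧ Odd z₀ := by
    rcases Int.natAbs_eq z with h | h
    · exact ⟨(m0:ℤ), by rw [h, hn]; push_cast; ring, by exact_mod_cast hm0odd.natCast (R := ℤ)⟩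
    · exact ⟨-(m0:ℤ), by rw [h, hn]; push_cast; ring, by
        have : Odd (m0:ℤ) := by exact_mod_cast hm0odd.natCast (R := ℤ)
        simpa using this.neg⟩
  obtain ⟨m, hm⟩ : ∃ m, q = 8*m+1 := ⟨q/8, by omega⟩
  have hqodd : Odd q := by rw [hm]; exact ⟨4*m, by ring⟩
  -- inverse of y mod 2^(c+2)
  have cop2y : IsCoprime (2:ℤ) y := by
    obtain ⟨j, rfl⟩ := hy
    exact ⟨-j, 1, by ring⟩
  obtain ⟨u, v, huv⟩ := (cop2y.pow_left : IsCoprime ((2:ℤ)^(c+2)) y)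
  set s : ℤ := v*(z-x) with hsdef
  set t : ℤ := -(u*(z-x)) with htdef
  have hE2 : (2:ℤ)^(c+2) = 4*E := by rw [pow_add]; ring
  have hs : s*y = (z - x) + 4*E*t := by
    have : (u*(2:ℤ)^(c+2) + v*y) * (z-x) = 1*(z-x) := by rw [huv]
    rw [hE2] at this
    linear_combination this
  -- Key 1 : the valuation of s^2 - p
  set W : ℤ := (8*E*t^2 + 4*t*(z-x)) + z₀*((4*m+1)*z - x) with hWdef
  have key1 : y^2*(s^2 - p) = (2*E) * W := by
    linear_combination (s*y + (z - x) + 4*E*t) * hs + heq + z^2 * hm + 2*((4*m+1)*z - x) * hz0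
  have hWodd : Odd W := by
    have h1 : Even ((4*m+1)*z) := hze.mul_left _
    have h2 : Odd ((4*m+1)*z - x) := h1.sub_odd hx
    have h3 : Even (8*E*t^2 + 4*t*(z-x)) := ⟨4*E*t^2 + 2*t*(z-x), by ring⟩
    exact h3.add_odd (hz₀odd.mul h2)
  have hE1 : (2:ℤ)^(c+1) = 2*E := by rw [pow_succ]; ring
  have copEy : IsCoprime (2*E : ℤ) (y^2) := by
    rw [← hE1]; exact ((cop2y.pow_left : IsCoprime ((2:ℤ)^(c+1)) y)).pow_right
  have hdvd1 : (2*E : ℤ) ∣ (s^2 - p) := by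
    apply copEy.dvd_of_dvd_mul_right
    exact ⟨W, by linear_combination key1⟩
  obtain ⟨V, hV⟩ := hdvd1
  have hWV : W = y^2 * V := by
    have h2E : (2*E : ℤ) ≠ 0 := by simp [hE0]
    apply mul_left_cancel₀ h2E
    rw [← key1, hV]; ring
  have hVodd : Odd V := by
    have : Odd (y^2 * V) := by rw [← hWV]; exact hWodd
    exact (Int.odd_mul.mp this).2
  -- the new (unnormalized) solution
  set Y : ℤ := 2*s*x + y*(s^2+p) with hYdef
  set X : ℤ := x*(s^2+p) + 2*p*s*y with hXdef
  set Z : ℤ := z*(s^2-p) with hZdef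
  have hXYZ : X^2 - p*Y^2 - q*Z^2 = 0 := by
    linear_combination (s^2-p)^2 * heq
  -- Key 2 : valuation of Y
  set U : ℤ := t*z₀ + 2*t^2 - m*z₀^2 with hUdef
  have key2 : y*Y = 8*E^2*U := by
    linear_combination (s*y + x + z + 4*E*t) * hs - heq + z^2*hm + (8*E*t + (8*m)*(z + E*z₀))*hz0 - 2*z^2*hm - 16*m*(z + E*z₀)*hz0
  have copE2y : IsCoprime (8*E^2 : ℤ) y := by
    have : (2:ℤ)^(c+c+3) = 8*E^2 := by rw [pow_add, pow_add]; ring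
    rw [← this]; exact cop2y.pow_left
  have hdvd2 : (8*E^2 : ℤ) ∣ Y := by
    apply copE2y.dvd_of_dvd_mul_left
    exact ⟨U, by linear_combination key2⟩
  obtain ⟨Y₂, hY2⟩ := hdvd2
  -- normalized coordinates
  set Z₁ : ℤ := z₀ * V with hZ1def
  set Y₁ : ℤ := 4 * Y₂ with hY1def
  have hZZ : Z = 2*E^2*Z₁ := by rw [hZdef, hz0, hV]; ring
  have hYY : Y = 2*E^2*Y₁ := by rw [hY2, hY1def]; ring
  have hZ1odd : Odd Z₁ := hz₀odd.mul hVodd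
  have hY1even : Even Y₁ := ⟨2*Y₂, by ring⟩
  have hD : X^2 = ((2:ℤ)^(c+c+1))^2 * (p*Y₁^2 + q*Z₁^2) := by
    have he : ((2:ℤ)^(c+c+1))^2 = 4*E^4 := by rw [pow_add, pow_add]; ring
    rw [he]
    have : X^2 = p*Y^2 + q*Z^2 := by linear_combination hXYZ
    rw [this, hYY, hZZ]; ring
  have hDodd : Odd (p*Y₁^2 + q*Z₁^2) := by
    have h1 : Even (p*Y₁^2) := (by rw [sq]; exact hY1even.mul_right _ : Even (Y₁^2)).mul_left p
    have h2 : Odd (q*Z₁^2) := hqodd.mul hZ1odd.pow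
    exact h1.add_odd h2
  obtain ⟨X₁, hX1, hX1odd⟩ := sq_eq_four_pow (c+c+1) X _ hD hDodd
  refine ⟨X₁, Y₁, Z₁, ?_, hX1odd, hY1even⟩
  have hcancel : ((2:ℤ)^(c+c+1))^2 * (X₁^2 - p*Y₁^2 - q*Z₁^2) = 0 := by
    have hXr : X = 2*E^2*X₁ := by
      rw [hX1]; rw [show (2:ℤ)^(c+c+1) = 2*E^2 by rw [pow_add, pow_add]; ring]
    calc ((2:ℤ)^(c+c+1))^2 * (X₁^2 - p*Y₁^2 - q*Z₁^2)
        = (2*E^2)^2 * (X₁^2 - p*Y₁^2 - q*Z₁^2) := by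
          rw [show (2:ℤ)^(c+c+1) = 2*E^2 by rw [pow_add, pow_add]; ring]
      _ = X^2 - p*Y^2 - q*Z^2 := by rw [hXr, hYY, hZZ]; ring
      _ = 0 := hXYZ
  have hne : (((2:ℤ)^(c+c+1))^2 : ℤ) ≠ 0 := pow_ne_zero _ (pow_ne_zero _ two_ne_zero)
  exact (mul_eq_zero.mp hcancel).resolve_left hne

lemma natAbs_sq_eq {x : ℤ} {n : ℕ} (h : x^2 = (n:ℤ)) : x.natAbs ^ 2 = n := by
  have h2 := congrArg Int.natAbs h
  simpa [Int.natAbs_pow] using h2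

lemma prime_not_sq {p : ℕ} (hp : p.Prime) (x : ℤ) : x^2 ≠ (p:ℤ) := by
  intro h
  have h3 : x.natAbs ^ 2 = p := natAbs_sq_eq h
  have hdvd : x.natAbs ∣ p := by rw [← h3]; exact dvd_pow_self _ two_ne_zero
  rcases (Nat.Prime.eq_one_or_self_of_dvd hp _ hdvd) with h1 | h1 <;> rw [h1] at h3
  · simp at h3; exact hp.ne_one h3.symm
  · nlinarith [hp.two_le]

lemma prime_mul_not_sq {p q : ℕ} (hp : p.Prime) (hq : q.Prime) (hpq : p ≠ q) (x : ℤ) :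
    x^2 ≠ (p:ℤ)*(q:ℤ) := by
  intro h
  have h3 : x.natAbs ^ 2 = p * q := natAbs_sq_eq (by push_cast; exact h)
  have hdvd : p ∣ x.natAbs := hp.dvd_of_dvd_pow (⟨q, h3⟩ : p ∣ x.natAbs ^ 2)
  obtain ⟨k, hk⟩ := hdvd
  have h4 : p * (p * k^2) = p * q := by rw [hk] at h3; linear_combination h3
  have h5 : p * k^2 = q := Nat.eq_of_mul_eq_mul_left hp.pos h4
  exact hpq ((Nat.prime_dvd_prime_iff_eq hp hq).mp ⟨k^2, h5.symm⟩)

/-- Legendre-style pigeonhole: existence of a nontrivial solution. -/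
lemma exists_nontrivial_solution (p q : ℕ) (hp : p.Prime) (hq : q.Prime) (hpq : p ≠ q)
    (ha : ∃ a : ℤ, (q:ℤ) ∣ a^2 - p) (hb : ∃ b : ℤ, (p:ℤ) ∣ b^2 - q) :
    ∃ x y z : ℤ, x^2 - (p:ℤ)*y^2 - (q:ℤ)*z^2 = 0 ∧ ¬(x = 0 ∧ y = 0 ∧ z = 0) := by
  obtain ⟨a, ha⟩ := ha
  obtain ⟨b, hb⟩ := hb
  haveI : NeZero p := ⟨hp.pos.ne'⟩
  haveI : NeZero q := ⟨hq.pos.ne'⟩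
  set A := Nat.sqrt (p*q) with hA
  set B := Nat.sqrt q with hB
  set C := Nat.sqrt p with hC
  set f : Fin (A+1) × Fin (B+1) × Fin (C+1) → ZMod q × ZMod p := fun v =>
    (((v.1 : ℕ) : ZMod q) - (a : ZMod q) * ((v.2.1 : ℕ) : ZMod q),
     ((v.1 : ℕ) : ZMod p) - (b : ZMod p) * ((v.2.2 : ℕ) : ZMod p)) with hf
  have hcard : Fintype.card (ZMod q × ZMod p) < Fintype.card (Fin (A+1) × Fin (B+1) × Fin (C+1)) := by
    simp only [Fintype.card_prod, ZMod.card, Fintype.card_fin]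
    have h1 : p*q < (A+1)^2 := Nat.lt_succ_sqrt' _
    have h2 : q < (B+1)^2 := Nat.lt_succ_sqrt' _
    have h3 : p < (C+1)^2 := Nat.lt_succ_sqrt' _
    have h4 : q*p < (B+1)^2*((C+1)^2) := Nat.mul_lt_mul'' h2 h3
    have h5 : (p*q)*(q*p) < (A+1)^2 * ((B+1)^2*((C+1)^2)) := Nat.mul_lt_mul'' h1 h4
    have key : (q*p)^2 < ((A+1)*((B+1)*(C+1)))^2 := by
      calc (q*p)^2 = (p*q)*(q*p) := by ring
        _ < (A+1)^2 * ((B+1)^2*((C+1)^2)) := h5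
        _ = ((A+1)*((B+1)*(C+1)))^2 := by ring
    exact lt_of_pow_lt_pow_left₀ 2 (by positivity) key
  obtain ⟨v, w, hvw, hfvw⟩ := Fintype.exists_ne_map_eq_of_card_lt f hcard
  set x : ℤ := ((v.1 : ℕ) : ℤ) - ((w.1 : ℕ) : ℤ) with hx
  set y : ℤ := ((v.2.1 : ℕ) : ℤ) - ((w.2.1 : ℕ) : ℤ) with hy
  set z : ℤ := ((v.2.2 : ℕ) : ℤ) - ((w.2.2 : ℕ) : ℤ) with hz
  have hnz : ¬(x = 0 ∧ y = 0 ∧ z = 0) := by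
    rintro ⟨h1, h2, h3⟩
    apply hvw
    have e1 : v.1 = w.1 := Fin.ext (by omega)
    have e2 : v.2.1 = w.2.1 := Fin.ext (by omega)
    have e3 : v.2.2 = w.2.2 := Fin.ext (by omega)
    exact Prod.ext e1 (Prod.ext e2 e3)
  have hq1 : (q:ℤ) ∣ x - a*y := by
    have h1 : (((x - a*y : ℤ)) : ZMod q) = 0 := by
      have h0 := (Prod.ext_iff.mp hfvw).1
      simp only [hf] at h0
      rw [hx, hy]
      push_cast
      linear_combination h0
    exact (ZMod.intCast_zmod_eq_zero_iff_dvd _ q).mp h1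
  have hp1 : (p:ℤ) ∣ x - b*z := by
    have h1 : (((x - b*z : ℤ)) : ZMod p) = 0 := by
      have h0 := (Prod.ext_iff.mp hfvw).2
      simp only [hf] at h0
      rw [hx, hz]
      push_cast
      linear_combination h0
    exact (ZMod.intCast_zmod_eq_zero_iff_dvd _ p).mp h1
  set F : ℤ := x^2 - (p:ℤ)*y^2 - (q:ℤ)*z^2 with hF
  have hqF : (q:ℤ) ∣ F := by
    obtain ⟨k1, hk1⟩ := hq1
    obtain ⟨k2, hk2⟩ := ha
    exact ⟨k1*(x+a*y) + k2*y^2 - z^2, by linear_combination (x+a*y)*hk1 + y^2*hk2⟩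
  have hpF : (p:ℤ) ∣ F := by
    obtain ⟨k1, hk1⟩ := hp1
    obtain ⟨k2, hk2⟩ := hb
    exact ⟨k1*(x+b*z) + k2*z^2 - y^2, by linear_combination (x+b*z)*hk1 + z^2*hk2⟩
  have hcop : IsCoprime (p:ℤ) (q:ℤ) := by
    rw [Int.isCoprime_iff_gcd_eq_one]
    simpa [Int.gcd_natCast_natCast] using (Nat.coprime_primes hp hq).mpr hpq
  have hpqF : ((p:ℤ)*(q:ℤ)) ∣ F := hcop.mul_dvd hpF hqF
  -- bounds
  have hxb : x^2 < (p:ℤ)*(q:ℤ) := by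
    have h1 : x^2 ≤ ((A:ℤ))^2 := by
      have b1 : ((v.1 : ℕ) : ℤ) ≤ A := by exact_mod_cast Nat.lt_succ_iff.mp v.1.isLt
      have b2 : ((w.1 : ℕ) : ℤ) ≤ A := by exact_mod_cast Nat.lt_succ_iff.mp w.1.isLt
      have b3 : (0:ℤ) ≤ ((v.1 : ℕ) : ℤ) := by positivity
      have b4 : (0:ℤ) ≤ ((w.1 : ℕ) : ℤ) := by positivity
      nlinarith
    have h2 : ((A:ℤ))^2 ≤ (p:ℤ)*(q:ℤ) := by have := Nat.sqrt_le' (p*q); push_cast [← hA] at this ⊢; exact_mod_cast this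
    rcases lt_or_eq_of_le (le_trans h1 h2) with h | h
    · exact h
    · exact absurd h (prime_mul_not_sq hp hq hpq x)
  have hyb : (p:ℤ)*y^2 < (p:ℤ)*(q:ℤ) := by
    have h1 : y^2 ≤ ((B:ℤ))^2 := by
      have b1 : ((v.2.1 : ℕ) : ℤ) ≤ B := by exact_mod_cast Nat.lt_succ_iff.mp v.2.1.isLt
      have b2 : ((w.2.1 : ℕ) : ℤ) ≤ B := by exact_mod_cast Nat.lt_succ_iff.mp w.2.1.isLt
      have b3 : (0:ℤ) ≤ ((v.2.1 : ℕ) : ℤ) := by positivity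
      have b4 : (0:ℤ) ≤ ((w.2.1 : ℕ) : ℤ) := by positivity
      nlinarith
    have h2 : ((B:ℤ))^2 ≤ (q:ℤ) := by have := Nat.sqrt_le' q; push_cast [← hB] at this ⊢; exact_mod_cast this
    have h3 : y^2 < (q:ℤ) := lt_of_le_of_ne (le_trans h1 h2) (prime_not_sq hq y)
    have hp0 : (0:ℤ) < p := by exact_mod_cast hp.pos
    nlinarith
  have hzb : (q:ℤ)*z^2 < (p:ℤ)*(q:ℤ) := by
    have h1 : z^2 ≤ ((C:ℤ))^2 := by
      have b1 : ((v.2.2 : ℕ) : ℤ) ≤ C := by exact_mod_cast Nat.lt_succ_iff.mp v.2.2.isLt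
      have b2 : ((w.2.2 : ℕ) : ℤ) ≤ C := by exact_mod_cast Nat.lt_succ_iff.mp w.2.2.isLt
      have b3 : (0:ℤ) ≤ ((v.2.2 : ℕ) : ℤ) := by positivity
      have b4 : (0:ℤ) ≤ ((w.2.2 : ℕ) : ℤ) := by positivity
      nlinarith
    have h2 : ((C:ℤ))^2 ≤ (p:ℤ) := by have := Nat.sqrt_le' p; push_cast [← hC] at this ⊢; exact_mod_cast this
    have h3 : z^2 < (p:ℤ) := lt_of_le_of_ne (le_trans h1 h2) (prime_not_sq hp z)
    have hq0 : (0:ℤ) < q := by exact_mod_cast hq.pos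
    nlinarith
  obtain ⟨k, hk⟩ := hpqF
  have hpq0 : (0:ℤ) < (p:ℤ)*(q:ℤ) := by exact_mod_cast Nat.mul_pos hp.pos hq.pos
  have hkcase : k = 0 ∨ k = -1 := by
    have hk1 : (p:ℤ)*(q:ℤ)*k < (p:ℤ)*(q:ℤ) := by rw [← hk]; nlinarith [sq_nonneg y, sq_nonneg z]
    have hk2 : -(2*((p:ℤ)*(q:ℤ))) < (p:ℤ)*(q:ℤ)*k := by rw [← hk]; nlinarith [sq_nonneg x]
    have c1 : k < 1 := by nlinarith
    have c2 : -2 < k := by nlinarith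
    omega
  rcases hkcase with rfl | rfl
  · exact ⟨x, y, z, by rw [← hF]; simpa using hk, hnz⟩
  · -- F = -pq : apply the composition trick
    have hFval : x^2 - (p:ℤ)*y^2 - (q:ℤ)*z^2 = -((p:ℤ)*(q:ℤ)) := by rw [← hF]; rw [hk]; ring
    refine ⟨x*z - (p:ℤ)*y, y*z - x, z^2 - (p:ℤ), by linear_combination (z^2 - (p:ℤ)) * hFval, ?_⟩
    rintro ⟨-, -, h3⟩
    exact prime_not_sq hp z (by linarith [sub_eq_zero.mp h3])

lemma odd_sq_mod8 (x : ℤ) (h : Odd x) : x^2 % 8 = 1 := by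
  obtain ⟨k, rfl⟩ := h
  obtain ⟨m, hm⟩ := Int.even_mul_succ_self k
  have : (2*k+1)^2 = 8*m + 1 := by linear_combination 4*hm
  omega

lemma even_sq_mod8 (x : ℤ) (h : Even x) : x^2 % 8 = 0 ∨ x^2 % 8 = 4 := by
  obtain ⟨k, rfl⟩ := h
  rcases Int.even_or_odd k with he | ho
  · obtain ⟨j, rfl⟩ := he
    have : (j+j+(j+j))^2 = 8*(2*j^2) := by ring
    omega
  · obtain ⟨j, rfl⟩ := ho
    have : ((2*j+1)+(2*j+1))^2 = 8*(2*j^2+2*j) + 4 := by ring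
    omega

lemma make_primitive (x y z : ℤ) (hnz : ¬(x = 0 ∧ y = 0 ∧ z = 0)) :
    ∃ (g x' y' z' : ℤ), x = g*x' ∧ y = g*y' ∧ z = g*z' ∧ 0 < g ∧
      Int.gcd x' (Int.gcd y' z') = 1 := by
  set g : ℕ := Int.gcd x (Int.gcd y z) with hg
  have hg0 : g ≠ 0 := by
    intro h
    rw [hg] at h
    have h1 := Int.gcd_eq_zero_iff.mp h
    have h2 : (Int.gcd y z : ℤ) = 0 := h1.2
    have h3 : Int.gcd y z = 0 := by exact_mod_cast h2
    have h4 := Int.gcd_eq_zero_iff.mp h3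
    exact hnz ⟨h1.1, h4.1, h4.2⟩
  have hdx : (g:ℤ) ∣ x := (Int.gcd_dvd_left _ _)
  have hdyz : (g:ℤ) ∣ ((Int.gcd y z : ℕ) : ℤ) := (Int.gcd_dvd_right _ _)
  have hdy : (g:ℤ) ∣ y := hdyz.trans (Int.gcd_dvd_left _ _)
  have hdz : (g:ℤ) ∣ z := hdyz.trans (Int.gcd_dvd_right _ _)
  obtain ⟨x', hx'⟩ := hdx
  obtain ⟨y', hy'⟩ := hdy
  obtain ⟨z', hz'⟩ := hdz
  refine ⟨(g:ℤ), x', y', z', hx', hy', hz', by exact_mod_cast Nat.pos_of_ne_zero hg0, ?_⟩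
  set d : ℕ := Int.gcd x' (Int.gcd y' z') with hd
  have hdd : ((g*d : ℕ) : ℤ) ∣ (g : ℤ) := by
    have d1 : (d:ℤ) ∣ x' := (Int.gcd_dvd_left _ _)
    have d2 : (d:ℤ) ∣ y' := ((Int.gcd_dvd_right _ _)).trans (Int.gcd_dvd_left _ _)
    have d3 : (d:ℤ) ∣ z' := ((Int.gcd_dvd_right _ _)).trans (Int.gcd_dvd_right _ _)
    have e1 : ((g*d : ℕ) : ℤ) ∣ x := by push_cast; rw [hx']; exact mul_dvd_mul_left _ d1
    have e2 : ((g*d : ℕ) : ℤ) ∣ y := by push_cast; rw [hy']; exact mul_dvd_mul_left _ d2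
    have e3 : ((g*d : ℕ) : ℤ) ∣ z := by push_cast; rw [hz']; exact mul_dvd_mul_left _ d3
    rw [hg]
    exact Int.dvd_coe_gcd e1 (Int.dvd_coe_gcd e2 e3)
  have hdd' : g*d ∣ g := Int.natCast_dvd_natCast.mp hdd
  have : d ∣ 1 := (Nat.mul_dvd_mul_iff_left (Nat.pos_of_ne_zero hg0)).mp (by simpa using hdd')
  exact Nat.dvd_one.mp this

lemma parity_classify (p q x y z : ℤ) (hp8 : p % 8 = 1) (hq8 : q % 8 = 1)
    (heq : x^2 - p*y^2 - q*z^2 = 0) (hne : ¬(Even x ∧ Even y ∧ Even z)) :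
    (Odd x ∧ Even y ∧ Odd z) ∨ (Odd x ∧ Odd y ∧ Even z) := by
  obtain ⟨a, ha⟩ : ∃ a, p = 8*a+1 := ⟨p/8, by omega⟩
  obtain ⟨b, hb⟩ : ∃ b, q = 8*b+1 := ⟨q/8, by omega⟩
  have hk : x^2 - y^2 - z^2 = 8*(a*y^2 + b*z^2) := by
    linear_combination heq + y^2*ha + z^2*hb
  rcases Int.even_or_odd x with hx | hx <;> rcases Int.even_or_odd y with hy | hy <;>
    rcases Int.even_or_odd z with hz | hz
  · exact absurd ⟨hx, hy, hz⟩ hne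
  · have h1 := even_sq_mod8 x hx; have h2 := even_sq_mod8 y hy; have h3 := odd_sq_mod8 z hz; omega
  · have h1 := even_sq_mod8 x hx; have h2 := odd_sq_mod8 y hy; have h3 := even_sq_mod8 z hz; omega
  · have h1 := even_sq_mod8 x hx; have h2 := odd_sq_mod8 y hy; have h3 := odd_sq_mod8 z hz; omega
  · have h1 := odd_sq_mod8 x hx; have h2 := even_sq_mod8 y hy; have h3 := even_sq_mod8 z hz; omega
  · exact Or.inl ⟨hx, hy, hz⟩
  · exact Or.inr ⟨hx, hy, hz⟩
  · have h1 := odd_sq_mod8 x hx; have h2 := odd_sq_mod8 y hy; have h3 := odd_sq_mod8 z hz; omega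
lemma good_finish (p q : ℕ) (x y z : ℤ)
    (heq : x^2 - (p:ℤ)*y^2 - (q:ℤ)*z^2 = 0)
    (hgcd : Int.gcd x (Int.gcd y z) = 1) (hx : Odd x) (hy : Even y) :
    ∃ x y z : ℤ,
      x ^ 2 - (p : ℤ) * y ^ 2 - (q : ℤ) * z ^ 2 = 0 ∧
      Int.gcd x (Int.gcd y z) = 1 ∧
      Even y ∧
      x ≡ 1 + y [ZMOD 4] := by
  obtain ⟨k, hk⟩ := hx
  obtain ⟨j, hj⟩ := hy
  by_cases hc : x % 4 = (1 + y) % 4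
  · exact ⟨x, y, z, by linear_combination heq, hgcd, ⟨j, hj⟩, hc⟩
  · refine ⟨-x, y, z, by linear_combination heq, by simpa using hgcd, ⟨j, hj⟩, ?_⟩
    show (-x) % 4 = (1 + y) % 4
    omega


/-- Existence part of Proposition 4.2 (normproposition): for distinct primes
`p ≡ q ≡ 1 (mod 8)` with `p` a quadratic residue mod `q`, there are integers
`x, y, z` with `x² - p y² - q z² = 0`, `gcd(x,y,z) = 1`, `y` even and
`x ≡ 1 + y (mod 4)`. -/
theorem redei_norm_equation_two_primes
    (p q : ℕ) (hp : p.Prime) (hq : q.Prime) (hpq : p ≠ q)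
    (hp8 : p % 8 = 1) (hq8 : q % 8 = 1)
    (hres : IsSquare ((p : ZMod q))) :
    ∃ x y z : ℤ,
      x ^ 2 - (p : ℤ) * y ^ 2 - (q : ℤ) * z ^ 2 = 0 ∧
      Int.gcd x (Int.gcd y z) = 1 ∧
      Even y ∧
      x ≡ 1 + y [ZMOD 4] := by
  haveI := Fact.mk hp
  haveI := Fact.mk hq
  haveI : NeZero p := ⟨hp.pos.ne'⟩
  haveI : NeZero q := ⟨hq.pos.ne'⟩
  have hp8' : ((p:ℤ)) % 8 = 1 := by omega
  have hq8' : ((q:ℤ)) % 8 = 1 := by omega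
  -- quadratic residues
  have ha : ∃ a : ℤ, (q:ℤ) ∣ a^2 - p := by
    obtain ⟨r, hr⟩ := hres
    refine ⟨(r.val : ℤ), ?_⟩
    have : (((r.val : ℤ)^2 - p : ℤ) : ZMod q) = 0 := by
      push_cast
      simp only [ZMod.natCast_val, ZMod.intCast_cast, ZMod.cast_id]
      rw [hr]; ring
    exact (ZMod.intCast_zmod_eq_zero_iff_dvd _ q).mp this
  have hres' : IsSquare ((q : ZMod p)) := by
    have hp4 : p % 4 = 1 := by omega
    have hq2 : q ≠ 2 := by omega
    exact (ZMod.exists_sq_eq_prime_iff_of_mod_four_eq_one hp4 hq2).mpr hres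
  have hb : ∃ b : ℤ, (p:ℤ) ∣ b^2 - q := by
    obtain ⟨r, hr⟩ := hres'
    refine ⟨(r.val : ℤ), ?_⟩
    have : (((r.val : ℤ)^2 - q : ℤ) : ZMod p) = 0 := by
      push_cast
      simp only [ZMod.natCast_val, ZMod.intCast_cast, ZMod.cast_id]
      rw [hr]; ring
    exact (ZMod.intCast_zmod_eq_zero_iff_dvd _ p).mp this
  -- a nontrivial solution, made primitive
  obtain ⟨x, y, z, heq, hnz⟩ := exists_nontrivial_solution p q hp hq hpq ha hb
  obtain ⟨g, x', y', z', hgx, hgy, hgz, hgpos, hprim⟩ := make_primitive x y z hnz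
  have heq' : x'^2 - (p:ℤ)*y'^2 - (q:ℤ)*z'^2 = 0 := by
    have h2 : g^2 * (x'^2 - (p:ℤ)*y'^2 - (q:ℤ)*z'^2) = 0 := by
      rw [hgx, hgy, hgz] at heq; linear_combination heq
    exact (mul_eq_zero.mp h2).resolve_left (pow_ne_zero _ hgpos.ne')
  have hne : ¬(Even x' ∧ Even y' ∧ Even z') := by
    rintro ⟨⟨i1, e1⟩, ⟨i2, e2⟩, ⟨i3, e3⟩⟩
    have d1 : (2:ℤ) ∣ x' := ⟨i1, by omega⟩
    have d2 : (2:ℤ) ∣ y' := ⟨i2, by omega⟩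
    have d3 : (2:ℤ) ∣ z' := ⟨i3, by omega⟩
    have : (2:ℤ) ∣ ↑(Int.gcd x' (Int.gcd y' z')) := Int.dvd_coe_gcd d1 (Int.dvd_coe_gcd d2 d3)
    rw [hprim] at this
    norm_num at this
  rcases parity_classify (p:ℤ) (q:ℤ) x' y' z' hp8' hq8' heq' hne with
    ⟨hox, hey, -⟩ | ⟨hox, hoy, hez⟩
  · exact good_finish p q x' y' z' heq' hprim hox hey
  · -- bad case
    have hz'ne : z' ≠ 0 := by
      rintro rfl
      have hPprime : Prime ((p:ℤ)) := Nat.prime_iff_prime_int.mp hp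
      have hd1 : (p:ℤ) ∣ x' := by
        apply hPprime.dvd_of_dvd_pow (n := 2)
        exact ⟨y'^2, by linear_combination heq'⟩
      obtain ⟨x₀, hx₀⟩ := hd1
      have hd2 : (p:ℤ) ∣ y' := by
        apply hPprime.dvd_of_dvd_pow (n := 2)
        refine ⟨x₀^2, ?_⟩
        have hP0 : (p:ℤ) ≠ 0 := by exact_mod_cast hp.pos.ne'
        apply mul_left_cancel₀ hP0
        rw [hx₀] at heq'; linear_combination -heq'
      have : (p:ℤ) ∣ ↑(Int.gcd x' (Int.gcd y' (0:ℤ))) :=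
        Int.dvd_coe_gcd ⟨x₀, hx₀⟩ (Int.dvd_coe_gcd hd2 (dvd_zero _))
      rw [hprim] at this
      have : (p:ℤ) ∣ 1 := by simpa using this
      have := Int.le_of_dvd one_pos this
      have := hp.two_le
      omega
    obtain ⟨X, Y, Z, hXYZeq, hXodd, hYeven⟩ :=
      bad_to_good (p:ℤ) (q:ℤ) x' y' z' hq8' heq' hox hoy hez hz'ne
    have hXne : ¬(X = 0 ∧ Y = 0 ∧ Z = 0) := by
      rintro ⟨rfl, -, -⟩
      simp [Int.odd_iff] at hXodd
    obtain ⟨g2, X', Y', Z', hgX, hgY, hgZ, hg2pos, hprim2⟩ := make_primitive X Y Z hXne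
    have heq2 : X'^2 - (p:ℤ)*Y'^2 - (q:ℤ)*Z'^2 = 0 := by
      have h2 : g2^2 * (X'^2 - (p:ℤ)*Y'^2 - (q:ℤ)*Z'^2) = 0 := by
        rw [hgX, hgY, hgZ] at hXYZeq; linear_combination hXYZeq
      exact (mul_eq_zero.mp h2).resolve_left (pow_ne_zero _ hg2pos.ne')
    have hgodd : Odd g2 := by
      rw [hgX] at hXodd
      exact (Int.odd_mul.mp hXodd).1
    have hX'odd : Odd X' := by
      rw [hgX] at hXodd
      exact (Int.odd_mul.mp hXodd).2
    have hY'even : Even Y' := by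
      rw [hgY] at hYeven
      rcases Int.even_mul.mp hYeven with h | h
      · exact absurd h (Int.not_even_iff_odd.mpr hgodd)
      · exact h
    exact good_finish p q X' Y' Z' heq2 hprim2 hX'odd hY'even
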